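/- Let G be a group, H a subgroup of G, and A ⊆ G a subset that generates G and contains a representative of every right coset of H in G (and contains the identity). Then the set A' = {σ₁σ₂σ₃⁻¹ : σ₁,σ₂,σ₃ ∈ A} ∩ H generates H. -/

import Mathlib

/-- Schreier's lemma. -/
theorem schreier_lemma {G : Type*} [Group G] (H : Subgroup G) (A : Set G)
    (hone : (1 : G) ∈ A) (hgen : Subgroup.closure A = ⊤)
    (hrep : ∀ g : G, ∃ a ∈ A, g * a⁻¹ ∈ H) :
    Subgroup.closure
      ({x : G | ∃ s₁ ∈ A, ∃ s₂ ∈ A, ∃ s₃ ∈ A, x = s₁ * s₂ * s₃⁻¹} ∩ (H : Set G)) = H := by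
  classical
  -- build a transversal contained in A, containing 1
  let f : Quotient (QuotientGroup.rightRel H) → G := fun q =>
    if h : q = Quotient.mk'' (1 : G) then 1 else (hrep q.out).choose
  have hfA : ∀ q, f q ∈ A := by
    intro q
    by_cases h : q = Quotient.mk'' (1 : G)
    · simp [f, h, hone]
    · simpa [f, h] using (hrep q.out).choose_spec.1
  have hf : ∀ q, Quotient.mk'' (f q) = q := by
    intro q
    by_cases h : q = Quotient.mk'' (1 : G)
    · simp [f, h]
    · have := (hrep q.out).choose_spec.2
      simp only [f, h, dif_neg, not_false_iff]
      rw [← Quotient.out_eq' q]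
      exact Quotient.sound' (QuotientGroup.rightRel_apply.mpr (by simpa using this))
  have hR : Subgroup.IsComplement (H : Set G) (Set.range f) :=
    Subgroup.isComplement_range_right hf
  have hR1 : (1 : G) ∈ Set.range f := ⟨Quotient.mk'' 1, by simp [f]⟩
  have key := Subgroup.closure_mul_image_eq hR hR1 hgen
  refine le_antisymm ?_ ?_
  · rw [Subgroup.closure_le]
    exact Set.inter_subset_right
  · refine le_trans (le_of_eq key.symm) ?_
    rw [Subgroup.closure_le]
    rintro - ⟨g, hg, rfl⟩
    obtain ⟨r, hr, s, hs, rfl⟩ := hg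
    obtain ⟨q, hq⟩ := hr
    refine Subgroup.subset_closure ⟨⟨r, hq ▸ hfA q, s, hs, _, ?_, rfl⟩, Subgroup.IsComplement.mul_inv_toRightFun_mem hR (r * s)⟩
    obtain ⟨q', hq'⟩ := (Subgroup.IsComplement.toRightFun hR (r * s)).2
    exact hq' ▸ hfA q'
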